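/- Assume condition (A) holds for Π_h, and assume condition (B) holds for the index i with constant κ_i > 0. Then there exists a linear operator E_{h,i} : X_{h,i} → V_{h,i}, where X_{h,i} = T(V_{h,i}), such that T(E_{h,i} f_{h,i}) = f_{h,i} for all f_{h,i} ∈ X_{h,i} and ‖E_{h,i} f_{h,i}‖_𝕍 ≤ κ_i ‖Π_h‖ · ‖f_{h,i}‖_𝕏 for all f_{h,i} ∈ X_{h,i}. -/

import Mathlib

/-- Conditions (A) and (B) for the index `i` imply condition (B'): existence of a
linear extension operator `E_{h,i} : X_{h,i} → V_{h,i}` with `T ∘ E_{h,i} = Id` and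
`‖E_{h,i} f‖ ≤ κ_i ‖Π_h‖ ‖f‖`. -/
theorem exists_local_extension_operator
    {V : Type*} [NormedAddCommGroup V] [InnerProductSpace ℝ V] [CompleteSpace V]
    (V₀ : Submodule ℝ V) [IsClosed (V₀ : Set V)]
    {n : ℕ} (Vsub : Fin n → Submodule ℝ V) [∀ i, FiniteDimensional ℝ (Vsub i)]
    (Vh : Submodule ℝ V) (hVh : Vh = ⨆ i, Vsub i)
    -- Condition (A): a bounded projection `Π_h` onto `V_h` preserving `𝕍₀`.
    (Pih : V →L[ℝ] V)
    (hPirange : ∀ u : V, Pih u ∈ Vh)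
    (hPiproj : ∀ u ∈ Vh, Pih u = u)
    (hPipres : ∀ u ∈ V₀, Pih u ∈ V₀)
    -- Condition (B) for the index `i`, with constant `κᵢ > 0`.
    (i : Fin n) (κi : ℝ) (hκi : 0 < κi)
    (hB : ∀ u ∈ Vsub i,
      sInf {r : ℝ | ∃ u₀ ∈ V₀ ⊓ Vsub i, r = ‖u - u₀‖} ≤
        κi * sInf {r : ℝ | ∃ u₀ ∈ V₀ ⊓ Vh, r = ‖u - u₀‖}) :
    ∃ E : ↥((Vsub i).map V₀.mkQ) →ₗ[ℝ] V,
      (∀ f : ↥((Vsub i).map V₀.mkQ), E f ∈ Vsub i) ∧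
      (∀ f : ↥((Vsub i).map V₀.mkQ), V₀.mkQ (E f) = (f : V ⧸ V₀)) ∧
      (∀ f : ↥((Vsub i).map V₀.mkQ), ‖E f‖ ≤ κi * ‖Pih‖ * ‖(f : V ⧸ V₀)‖) := by
  classical
  have hVsub_le : Vsub i ≤ Vh := hVh ▸ le_iSup Vsub i
  -- `K` is `V₀ ∩ Vsub i` viewed inside `Vsub i`.
  set K : Submodule ℝ ↥(Vsub i) := V₀.comap (Vsub i).subtype with hK
  -- the candidate lifting map from `Kᗮ`
  let φ : ↥Kᗮ →ₗ[ℝ] ↥((Vsub i).map V₀.mkQ) :=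
    LinearMap.codRestrict _ (V₀.mkQ ∘ₗ (Vsub i).subtype ∘ₗ Kᗮ.subtype)
      (fun w => ⟨((w : ↥(Vsub i)) : V), (w : ↥(Vsub i)).2, rfl⟩)
  have hφ_apply : ∀ w : ↥Kᗮ, (φ w : V ⧸ V₀) = V₀.mkQ ((w : ↥(Vsub i)) : V) := fun w => rfl
  have hinj : Function.Injective φ := by
    rw [injective_iff_map_eq_zero]
    intro w hw
    have h0 : V₀.mkQ ((w : ↥(Vsub i)) : V) = 0 := by
      have := congrArg (Subtype.val) hw
      simpa [hφ_apply] using this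
    have hmem : ((w : ↥(Vsub i)) : V) ∈ V₀ := by
      rwa [Submodule.mkQ_apply, Submodule.Quotient.mk_eq_zero] at h0
    have hmemK : (w : ↥(Vsub i)) ∈ K := by simpa [hK, Submodule.mem_comap] using hmem
    have : (w : ↥(Vsub i)) = 0 :=
      Submodule.disjoint_def.mp K.orthogonal_disjoint _ hmemK w.2
    exact Subtype.ext this
  have hsurj : Function.Surjective φ := by
    rintro ⟨x, hx⟩
    obtain ⟨u, hu, hux⟩ := hx
    set u' : ↥(Vsub i) := ⟨u, hu⟩ with hu'
    set p : ↥K := K.orthogonalProjectionOnto u' with hp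
    refine ⟨⟨u' - (p : ↥(Vsub i)), K.sub_starProjection_mem_orthogonal u'⟩, ?_⟩
    apply Subtype.ext
    have hpV₀ : ((p : ↥(Vsub i)) : V) ∈ V₀ := p.2
    show V₀.mkQ ((u' - (p : ↥(Vsub i)) : ↥(Vsub i)) : V) = x
    rw [Submodule.coe_sub, map_sub]
    have : V₀.mkQ ((p : ↥(Vsub i)) : V) = 0 := by
      rwa [Submodule.mkQ_apply, Submodule.Quotient.mk_eq_zero]
    rw [this, sub_zero]
    exact hux
  set e := LinearEquiv.ofBijective φ ⟨hinj, hsurj⟩ with he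
  refine ⟨(Vsub i).subtype ∘ₗ Kᗮ.subtype ∘ₗ e.symm.toLinearMap, ?_, ?_, ?_⟩
  · intro f
    exact ((e.symm f : ↥Kᗮ) : ↥(Vsub i)).2
  · intro f
    calc V₀.mkQ (((e.symm f : ↥Kᗮ) : ↥(Vsub i)) : V) = (φ (e.symm f) : V ⧸ V₀) :=
          (hφ_apply _).symm
      _ = (e (e.symm f) : V ⧸ V₀) := rfl
      _ = (f : V ⧸ V₀) := congrArg Subtype.val (e.apply_symm_apply f)
  · intro f
    set w : ↥Kᗮ := e.symm f with hw
    set uV : V := ((w : ↥(Vsub i)) : V) with huV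
    have humem : uV ∈ Vsub i := (w : ↥(Vsub i)).2
    have hmkQ : V₀.mkQ uV = (f : V ⧸ V₀) := by
      calc V₀.mkQ uV = (φ (e.symm f) : V ⧸ V₀) := (hφ_apply _).symm
        _ = (e (e.symm f) : V ⧸ V₀) := rfl
        _ = (f : V ⧸ V₀) := congrArg Subtype.val (e.apply_symm_apply f)
    show ‖uV‖ ≤ κi * ‖Pih‖ * ‖(f : V ⧸ V₀)‖
    -- Step (a): `‖uV‖ ≤ ‖uV - v‖` for all `v ∈ V₀ ⊓ Vsub i`, by orthogonality.
    have horth : ∀ v ∈ V₀ ⊓ Vsub i, ‖uV‖ ≤ ‖uV - v‖ := by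
      intro v hv
      rw [Submodule.mem_inf] at hv
      set v' : ↥(Vsub i) := ⟨v, hv.2⟩ with hv'
      have hvK : v' ∈ K := by simpa [hK, Submodule.mem_comap] using hv.1
      have hiz := w.2 v' hvK
      have hiz' : (inner ℝ uV v : ℝ) = 0 := by
        rw [real_inner_comm] at hiz
        simpa [huV, Submodule.coe_inner] using hiz
      have hsq : ‖uV - v‖ ^ 2 = ‖uV‖ ^ 2 - 2 * (inner ℝ uV v : ℝ) + ‖v‖ ^ 2 :=
        norm_sub_sq_real uV v
      nlinarith [norm_nonneg (uV - v), norm_nonneg uV, norm_nonneg v, sq_nonneg (‖uV‖ - ‖uV - v‖)]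
    -- Step (b): `‖uV‖ ≤ sInf A`.
    have hA : ‖uV‖ ≤ sInf {r : ℝ | ∃ u₀ ∈ V₀ ⊓ Vsub i, r = ‖uV - u₀‖} := by
      apply le_csInf
      · exact ⟨‖uV - 0‖, 0, zero_mem _, rfl⟩
      · rintro r ⟨u₀, hu₀, rfl⟩
        exact horth u₀ hu₀
    -- Step (d): `sInf B ≤ ‖Pih‖ * ‖f‖`.
    have hBddB : BddBelow {r : ℝ | ∃ u₀ ∈ V₀ ⊓ Vh, r = ‖uV - u₀‖} := by
      refine ⟨0, ?_⟩
      rintro r ⟨u₀, hu₀, rfl⟩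
      exact norm_nonneg _
    have hD : sInf {r : ℝ | ∃ u₀ ∈ V₀ ⊓ Vh, r = ‖uV - u₀‖} ≤ ‖Pih‖ * ‖(f : V ⧸ V₀)‖ := by
      apply le_of_forall_pos_le_add
      intro ε hε
      have hε' : 0 < ε / (‖Pih‖ + 1) := by positivity
      obtain ⟨m, hm, hmn⟩ := Submodule.Quotient.norm_mk_lt (f : V ⧸ V₀) hε'
      have hmq : V₀.mkQ m = (f : V ⧸ V₀) := hm
      have hsub : uV - m ∈ V₀ := by
        rw [← Submodule.Quotient.eq]
        change V₀.mkQ uV = V₀.mkQ m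
        rw [hmkQ, hmq]
      set v₀ : V := Pih (uV - m) with hv₀
      have hv₀mem : v₀ ∈ V₀ ⊓ Vh := ⟨hPipres _ hsub, hPirange _⟩
      have hcalc : ‖uV - v₀‖ ≤ ‖Pih‖ * ‖m‖ := by
        have h1 : uV - v₀ = Pih m := by
          rw [hv₀, map_sub, hPiproj uV (hVsub_le humem)]
          abel
        rw [h1]
        exact Pih.le_opNorm m
      have hle : sInf {r : ℝ | ∃ u₀ ∈ V₀ ⊓ Vh, r = ‖uV - u₀‖} ≤ ‖uV - v₀‖ :=
        csInf_le hBddB ⟨v₀, hv₀mem, rfl⟩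
      have h2 : ‖Pih‖ * ‖m‖ ≤ ‖Pih‖ * (‖(f : V ⧸ V₀)‖ + ε / (‖Pih‖ + 1)) :=
        mul_le_mul_of_nonneg_left hmn.le (norm_nonneg _)
      have h3 : ‖Pih‖ * (ε / (‖Pih‖ + 1)) ≤ ε := by
        calc ‖Pih‖ * (ε / (‖Pih‖ + 1)) ≤ (‖Pih‖ + 1) * (ε / (‖Pih‖ + 1)) := by
              gcongr
              linarith
          _ = ε := by field_simp
      have h4 : ‖Pih‖ * (‖(f : V ⧸ V₀)‖ + ε / (‖Pih‖ + 1))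
          = ‖Pih‖ * ‖(f : V ⧸ V₀)‖ + ‖Pih‖ * (ε / (‖Pih‖ + 1)) := by ring
      linarith
    -- Combine.
    have hchain := hB uV humem
    calc ‖uV‖ ≤ sInf {r : ℝ | ∃ u₀ ∈ V₀ ⊓ Vsub i, r = ‖uV - u₀‖} := hA
      _ ≤ κi * sInf {r : ℝ | ∃ u₀ ∈ V₀ ⊓ Vh, r = ‖uV - u₀‖} := hchain
      _ ≤ κi * (‖Pih‖ * ‖(f : V ⧸ V₀)‖) := mul_le_mul_of_nonneg_left hD hκi.le
      _ = κi * ‖Pih‖ * ‖(f : V ⧸ V₀)‖ := by ring
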